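/- For the reverse Z channel, i.e. q = 0 and 0 < p < 1, and any 0 < θ < 1, the optimization values satisfy m_COMP(n,θ,p,0) ≥ m_DD(n,θ,p,0). -/

import Mathlib

open Real Set

noncomputable section

/-- KL divergence between Bernoulli(r) and Bernoulli(s) (natural log, boundary by continuity). -/
def klBer (r s : ℝ) : ℝ := r * Real.log (r / s) + (1 - r) * Real.log ((1 - r) / (1 - s))

def b1 (θ q α d : ℝ) : ℝ := θ / (1 - θ) * (1 / (d * klBer α q))

def b2 (θ p q α d : ℝ) : ℝ :=
  1 / (1 - θ) * (1 / (d * klBer α (Real.exp (-d) * (1 - p) + (1 - Real.exp (-d)) * q)))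

def compSet (θ p q : ℝ) : Set ℝ :=
  {x | ∃ d α : ℝ, 0 < d ∧
    α ∈ Set.Ioo q (Real.exp (-d) * (1 - p) + (1 - Real.exp (-d)) * q) ∧
    x = max (b1 θ q α d) (b2 θ p q α d)}

def wDD (p q d : ℝ) : ℝ := Real.exp (-d) * p + (1 - Real.exp (-d)) * (1 - q)

def c1 (θ q α d : ℝ) : ℝ := θ / (1 - θ) * (1 / (d * klBer α q))

def c2 (p q α d : ℝ) : ℝ := 1 / (d * klBer α (1 - wDD p q d))

def c3 (θ q β d : ℝ) : ℝ := θ / (1 - θ) * (1 / (d * klBer β ((1 - q) * Real.exp (-d))))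

def c4 (θ p q α β d : ℝ) : ℝ :=
  sSup {x | ∃ z ∈ Set.Icc (1 - α) 1,
    x = 1 / (1 - θ) * (1 / (d * (klBer z (wDD p q d) +
      (if β > z * (Real.exp (-d) * p) / wDD p q d then
        z * klBer (β / z) (Real.exp (-d) * p / wDD p q d) else 0))))}

def ddSet (θ p q : ℝ) : Set ℝ :=
  {x | ∃ d α β : ℝ, 0 < d ∧
    α ∈ Set.Ioo q (Real.exp (-d) * (1 - p) + (1 - Real.exp (-d)) * q) ∧
    β ∈ Set.Ioo 0 (Real.exp (-d) * (1 - q)) ∧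
    x = max (max (c1 θ q α d) (c2 p q α d)) (max (c3 θ q β d) (c4 θ p q α β d))}

/-- `m_COMP(n,θ,p,q)` for `k = ⌈n^θ⌉`. -/
def mCOMP (n : ℕ) (θ p q : ℝ) : ℝ :=
  sInf (compSet θ p q) *
    ((⌈(n : ℝ) ^ θ⌉₊ : ℝ) * Real.log (n / (⌈(n : ℝ) ^ θ⌉₊ : ℝ)))

/-- `m_DD(n,θ,p,q)` for `k = ⌈n^θ⌉`. -/
def mDD (n : ℕ) (θ p q : ℝ) : ℝ :=
  sInf (ddSet θ p q) *
    ((⌈(n : ℝ) ^ θ⌉₊ : ℝ) * Real.log (n / (⌈(n : ℝ) ^ θ⌉₊ : ℝ)))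


/-! ### Auxiliary lemmas -/

private lemma log_ge_one_sub_inv {x : ℝ} (hx : 0 < x) : 1 - 1/x ≤ Real.log x := by
  have h := Real.log_le_sub_one_of_pos (inv_pos.mpr hx)
  rw [Real.log_inv] at h
  rw [one_div]
  linarith

private lemma mul_log_div_ge {a b : ℝ} (ha : 0 ≤ a) (hb : 0 < b) :
    a - b ≤ a * Real.log (a / b) := by
  rcases ha.eq_or_lt with h | h
  · simp [← h]
    linarith
  · have h1 : 1 - b/a ≤ Real.log (a/b) := by
      have h2 := log_ge_one_sub_inv (div_pos h hb)
      rwa [one_div_div] at h2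
    have h3 : a * (1 - b/a) ≤ a * Real.log (a/b) := mul_le_mul_of_nonneg_left h1 h.le
    have h4 : a * (1 - b/a) = a - b := by field_simp
    linarith

private lemma mul_log_div_gt {a b : ℝ} (ha : 0 < a) (hb : 0 < b) (hne : a ≠ b) :
    a - b < a * Real.log (a / b) := by
  have hba : b / a ≠ 1 := by
    intro h
    exact hne ((div_eq_one_iff_eq ha.ne').mp h).symm
  have h2 := Real.log_lt_sub_one_of_pos (div_pos hb ha) hba
  have h3 : Real.log (a / b) = - Real.log (b / a) := by
    rw [Real.log_div ha.ne' hb.ne', Real.log_div hb.ne' ha.ne']; ring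
  have h1 : 1 - b/a < Real.log (a/b) := by rw [h3]; linarith
  have h5 : a * (1 - b/a) < a * Real.log (a/b) := mul_lt_mul_of_pos_left h1 ha
  have h4 : a * (1 - b/a) = a - b := by field_simp
  linarith

private lemma klBer_nonneg {r s : ℝ} (hr0 : 0 ≤ r) (hr1 : r ≤ 1) (hs0 : 0 < s) (hs1 : s < 1) :
    0 ≤ klBer r s := by
  have h1 := mul_log_div_ge hr0 hs0
  have h2 := mul_log_div_ge (by linarith : (0:ℝ) ≤ 1 - r) (by linarith : (0:ℝ) < 1 - s)
  unfold klBer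
  linarith

private lemma klBer_pos {r s : ℝ} (hr0 : 0 < r) (hr1 : r ≤ 1) (hs0 : 0 < s) (hs1 : s < 1)
    (hne : r ≠ s) : 0 < klBer r s := by
  have h1 := mul_log_div_gt hr0 hs0 hne
  have h2 := mul_log_div_ge (by linarith : (0:ℝ) ≤ 1 - r) (by linarith : (0:ℝ) < 1 - s)
  unfold klBer
  linarith

/-- Entropy-style reformulation of `klBer` -/
private def Fkl (w z : ℝ) : ℝ :=
  z * Real.log z + (1 - z) * Real.log (1 - z) - z * Real.log w - (1 - z) * Real.log (1 - w)

private lemma klBer_eq_Fkl {z w : ℝ} (hz0 : 0 ≤ z) (hz1 : z ≤ 1) (hw0 : 0 < w) (hw1 : w < 1) :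
    klBer z w = Fkl w z := by
  unfold klBer Fkl
  have h1 : z * Real.log (z / w) = z * Real.log z - z * Real.log w := by
    rcases hz0.eq_or_lt with h | h
    · simp [← h]
    · rw [Real.log_div h.ne' hw0.ne']; ring
  have h2 : (1 - z) * Real.log ((1 - z) / (1 - w))
      = (1 - z) * Real.log (1 - z) - (1 - z) * Real.log (1 - w) := by
    rcases hz1.eq_or_lt with h | h
    · simp [h]
    · rw [Real.log_div (by linarith : (1:ℝ) - z ≠ 0) (by linarith : (1:ℝ) - w ≠ 0)]; ring
  rw [h1, h2]; ring

private lemma Fkl_continuous (w : ℝ) : Continuous (Fkl w) := by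
  unfold Fkl
  exact ((Real.continuous_mul_log.add
      (Real.continuous_mul_log.comp (continuous_const.sub continuous_id))).sub
      (continuous_id.mul continuous_const)).sub
      ((continuous_const.sub continuous_id).mul continuous_const)

private lemma Fkl_hasDerivAt {w x : ℝ} (hx0 : 0 < x) (hx1 : x < 1) :
    HasDerivAt (Fkl w)
      (Real.log x - Real.log (1 - x) - Real.log w + Real.log (1 - w)) x := by
  have h1 : HasDerivAt (fun z : ℝ => z * Real.log z) (Real.log x + 1) x :=
    Real.hasDerivAt_mul_log hx0.ne'
  have hi : HasDerivAt (fun z : ℝ => 1 - z) (-1) x := (hasDerivAt_id x).const_sub 1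
  have ho : HasDerivAt (fun u : ℝ => u * Real.log u) (Real.log (1 - x) + 1) (1 - x) :=
    Real.hasDerivAt_mul_log (by linarith)
  have h2 : HasDerivAt (fun z : ℝ => (1 - z) * Real.log (1 - z))
      ((Real.log (1 - x) + 1) * (-1)) x := ho.comp x hi
  have h3 : HasDerivAt (fun z : ℝ => z * Real.log w) (1 * Real.log w) x :=
    (hasDerivAt_id x).mul_const _
  have h4 : HasDerivAt (fun z : ℝ => (1 - z) * Real.log (1 - w)) ((-1) * Real.log (1 - w)) x :=
    hi.mul_const _
  have h5 := ((h1.add h2).sub h3).sub h4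
  rw [show Real.log x - Real.log (1 - x) - Real.log w + Real.log (1 - w)
      = Real.log x + 1 + (Real.log (1 - x) + 1) * -1 - 1 * Real.log w - -1 * Real.log (1 - w) by ring]
  exact h5

private lemma Fkl_mono {w : ℝ} (hw0 : 0 < w) (hw1 : w < 1) :
    MonotoneOn (Fkl w) (Set.Icc w 1) := by
  apply monotoneOn_of_deriv_nonneg (convex_Icc w 1) (Fkl_continuous w).continuousOn
  · intro x hx
    rw [interior_Icc] at hx
    exact (Fkl_hasDerivAt (hw0.trans hx.1) hx.2).differentiableAt.differentiableWithinAt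
  · intro x hx
    rw [interior_Icc] at hx
    rw [(Fkl_hasDerivAt (hw0.trans hx.1) hx.2).deriv]
    have l1 : Real.log w ≤ Real.log x := Real.log_le_log hw0 hx.1.le
    have l2 : Real.log (1 - x) ≤ Real.log (1 - w) :=
      Real.log_le_log (by linarith [hx.1, hx.2]) (by linarith [hx.1, hx.2])
    linarith

private lemma klBer_mono {w z1 z2 : ℝ} (hw0 : 0 < w) (hw1 : w < 1)
    (h1 : w ≤ z1) (h2 : z1 ≤ z2) (h3 : z2 ≤ 1) : klBer z1 w ≤ klBer z2 w := by
  rw [klBer_eq_Fkl (by linarith) (by linarith) hw0 hw1, klBer_eq_Fkl (by linarith) h3 hw0 hw1]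
  exact Fkl_mono hw0 hw1 ⟨h1, by linarith⟩ ⟨h1.trans h2, h3⟩ h2

private lemma klBer_symm (r s : ℝ) : klBer r s = klBer (1 - r) (1 - s) := by
  unfold klBer
  rw [sub_sub_cancel, sub_sub_cancel]
  ring

private lemma klBer_one (t : ℝ) : klBer 1 t = - Real.log t := by
  simp [klBer, one_div, Real.log_inv]

/-- **DD dominates COMP on the reverse Z channel** (Corollary 2.14).  For `q = 0` and
`0 < p < 1`, `m_COMP(n,θ,p,0) ≥ m_DD(n,θ,p,0)`. -/
theorem comp_ge_dd_revZ
    (p θ : ℝ) (hp0 : 0 < p) (hp1 : p < 1) (hθ0 : 0 < θ) (hθ1 : θ < 1) :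
    ∀ n : ℕ, mDD n θ p 0 ≤ mCOMP n θ p 0 := by
  have hθ' : 0 < 1 - θ := by linarith
  -- DD set is bounded below by 0
  have hbdd : ∀ x ∈ ddSet θ p 0, (0:ℝ) ≤ x := by
    rintro x ⟨d, α, β, hd, hα, hβ, rfl⟩
    simp only [mul_zero, add_zero, Set.mem_Ioo] at hα
    have hc0 : 0 < Real.exp (-d) := Real.exp_pos _
    have hc1 : Real.exp (-d) < 1 := Real.exp_lt_one_iff.mpr (by linarith)
    have hs1 : Real.exp (-d) * (1 - p) < 1 := by nlinarith
    have hs0 : 0 < Real.exp (-d) * (1 - p) := by nlinarith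
    have hw : 1 - wDD p 0 d = Real.exp (-d) * (1 - p) := by unfold wDD; ring
    have hc2 : 0 ≤ c2 p 0 α d := by
      unfold c2
      rw [hw]
      have hkl := klBer_nonneg hα.1.le (by linarith : α ≤ 1) hs0 hs1
      exact div_nonneg zero_le_one (mul_nonneg hd.le hkl)
    exact le_trans hc2 (le_trans (le_max_right _ _) (le_max_left _ _))
  -- main comparison of infima
  have key : sInf (ddSet θ p 0) ≤ sInf (compSet θ p 0) := by
    have hne : (compSet θ p 0).Nonempty := by
      refine ⟨_, 1, Real.exp (-1) * (1 - p) / 2, one_pos, ⟨?_, ?_⟩, rfl⟩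
      · exact div_pos (mul_pos (Real.exp_pos _) (by linarith)) two_pos
      · have h0 : 0 < Real.exp (-1:ℝ) * (1 - p) :=
          mul_pos (Real.exp_pos _) (by linarith)
        nlinarith
    refine le_csInf hne ?_
    rintro y ⟨d, α, hd, hα, rfl⟩
    simp only [mul_zero, add_zero, Set.mem_Ioo] at hα
    have hc0 : 0 < Real.exp (-d) := Real.exp_pos _
    have hc1 : Real.exp (-d) < 1 := Real.exp_lt_one_iff.mpr (by linarith)
    set c := Real.exp (-d) with hc_def
    set s := c * (1 - p) with hs_def
    have hs0 : 0 < s := by nlinarith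
    have hsc : s < c := by nlinarith
    have hs1 : s < 1 := by linarith
    have hα0 : 0 < α := hα.1
    have hαs : α < s := hα.2
    have hα1 : α < 1 := by linarith
    set K := klBer α s with hK_def
    have hK : 0 < K := klBer_pos hα0 hα1.le hs0 hs1 (ne_of_lt hαs)
    -- upper bound : K ≤ -log (1 - s) < -log (1 - c)
    have hKup : K ≤ - Real.log (1 - s) := by
      have e1 : K = klBer (1 - α) (1 - s) := klBer_symm α s
      have e2 : klBer (1 - α) (1 - s) ≤ klBer 1 (1 - s) :=
        klBer_mono (by linarith) (by linarith) (by linarith) (by linarith) le_rfl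
      rw [e1, klBer_one] at *
      linarith [e2]
    have hlogs : - Real.log (1 - s) < - Real.log (1 - c) := by
      have := Real.log_lt_log (by linarith : (0:ℝ) < 1 - c) (by linarith : 1 - c < 1 - s)
      linarith
    have hθK : θ * K < - Real.log (1 - c) := by nlinarith [mul_pos hθ' hK]
    -- choose β
    have htd : Filter.Tendsto (fun β => klBer β c) (nhdsWithin 0 (Set.Ioi 0))
        (nhds (- Real.log (1 - c))) := by
      have h0 : Filter.Tendsto (Fkl c) (nhdsWithin 0 (Set.Ioi 0)) (nhds (Fkl c 0)) :=
        ((Fkl_continuous c).tendsto 0).mono_left nhdsWithin_le_nhds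
      have hF0 : Fkl c 0 = - Real.log (1 - c) := by simp [Fkl]
      rw [hF0] at h0
      refine h0.congr' ?_
      have hlt1 : ∀ᶠ β in nhdsWithin (0:ℝ) (Set.Ioi 0), β < 1 :=
        Filter.Eventually.filter_mono nhdsWithin_le_nhds (eventually_lt_nhds zero_lt_one)
      filter_upwards [self_mem_nhdsWithin, hlt1] with β hβ hβ1
      exact (klBer_eq_Fkl (le_of_lt hβ) hβ1.le hc0 hc1).symm
    have hev : ∀ᶠ β in nhdsWithin (0:ℝ) (Set.Ioi 0),
        θ * K < klBer β c ∧ β < min c (1 - α) ∧ 0 < β := by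
      have e1 := htd.eventually_const_lt hθK
      have e2 : ∀ᶠ β in nhdsWithin (0:ℝ) (Set.Ioi 0), β < min c (1 - α) :=
        Filter.Eventually.filter_mono nhdsWithin_le_nhds
          (eventually_lt_nhds (lt_min hc0 (by linarith)))
      have e3 : ∀ᶠ β in nhdsWithin (0:ℝ) (Set.Ioi 0), (0:ℝ) < β := self_mem_nhdsWithin
      exact e1.and (e2.and e3)
    obtain ⟨β, hβK, hβm, hβ0⟩ := hev.exists
    have hβc : β < c := lt_of_lt_of_le hβm (min_le_left _ _)
    have hβα : β < 1 - α := lt_of_lt_of_le hβm (min_le_right _ _)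
    have hKβ : 0 < klBer β c := lt_trans (mul_pos hθ0 hK) hβK
    -- properties of w
    have hw0 : 0 < wDD p 0 d := by unfold wDD; nlinarith
    have hw1 : wDD p 0 d < 1 := by unfold wDD; nlinarith
    have hwα : wDD p 0 d ≤ 1 - α := by
      have : 1 - wDD p 0 d = s := by unfold wDD; ring
      linarith
    have hwK : klBer α (1 - wDD p 0 d) = K := by
      have h1mw : 1 - wDD p 0 d = s := by unfold wDD; ring
      rw [h1mw]
    -- the candidate element of ddSet
    refine le_trans (csInf_le ⟨0, fun x hx => hbdd x hx⟩
      (⟨d, α, β, hd, ?_, ?_, rfl⟩ : max (max (c1 θ 0 α d) (c2 p 0 α d))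
        (max (c3 θ 0 β d) (c4 θ p 0 α β d)) ∈ ddSet θ p 0)) ?_
    · simp only [mul_zero, add_zero, Set.mem_Ioo]
      exact ⟨hα0, hαs⟩
    · simp only [sub_zero, mul_one, Set.mem_Ioo]
      exact ⟨hβ0, hβc⟩
    -- now show the max is at most max b1 b2
    have hb2 : b2 θ p 0 α d = 1 / (1 - θ) * (1 / (d * K)) := by
      unfold b2
      rw [show Real.exp (-d) * (1 - p) + (1 - Real.exp (-d)) * 0 = s by rw [hs_def]; ring]
    have hb2pos : 0 < b2 θ p 0 α d := by
      rw [hb2]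
      exact mul_pos (one_div_pos.mpr hθ') (one_div_pos.mpr (mul_pos hd hK))
    apply max_le (max_le ?_ ?_) (max_le ?_ ?_)
    · -- c1 = b1
      exact le_max_left (b1 θ 0 α d) (b2 θ p 0 α d)
    · -- c2 ≤ b2
      refine le_trans ?_ (le_max_right _ _)
      unfold c2
      rw [hwK, hb2]
      have h1 : (1:ℝ) ≤ 1 / (1 - θ) := by
        rw [le_div_iff₀ hθ']; linarith
      calc 1 / (d * K) = 1 * (1 / (d * K)) := (one_mul _).symm
        _ ≤ 1 / (1 - θ) * (1 / (d * K)) :=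
            mul_le_mul_of_nonneg_right h1
              (div_nonneg zero_le_one (mul_pos hd hK).le)
    · -- c3 ≤ b2
      refine le_trans ?_ (le_max_right _ _)
      unfold c3
      rw [show ((1:ℝ) - 0) * Real.exp (-d) = c by rw [hc_def]; ring, hb2]
      have hKne : K ≠ 0 := hK.ne'
      have hdne : d ≠ 0 := hd.ne'
      have hθne : θ ≠ 0 := hθ0.ne'
      have hθ'ne : (1 - θ) ≠ 0 := hθ'.ne'
      have heq : θ / (1 - θ) * (1 / (d * (θ * K))) = 1 / (1 - θ) * (1 / (d * K)) := by
        field_simp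
      calc θ / (1 - θ) * (1 / (d * klBer β c))
          ≤ θ / (1 - θ) * (1 / (d * (θ * K))) := by
            apply mul_le_mul_of_nonneg_left _ (div_nonneg hθ0.le hθ'.le)
            apply one_div_le_one_div_of_le (mul_pos hd (mul_pos hθ0 hK))
            exact mul_le_mul_of_nonneg_left hβK.le hd.le
        _ = 1 / (1 - θ) * (1 / (d * K)) := heq
    · -- c4 ≤ b2
      refine le_trans ?_ (le_max_right _ _)
      unfold c4
      apply Real.sSup_le _ hb2pos.le
      rintro x ⟨z, hz, rfl⟩
      set E := (if β > z * (Real.exp (-d) * p) / wDD p 0 d then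
        z * klBer (β / z) (Real.exp (-d) * p / wDD p 0 d) else 0) with hE_def
      have hzα : 1 - α ≤ z := hz.1
      have hz1 : z ≤ 1 := hz.2
      have hz0 : 0 < z := by linarith
      have hA : K ≤ klBer z (wDD p 0 d) := by
        have e1 : K = klBer (1 - α) (wDD p 0 d) := by
          rw [klBer_symm (1 - α) (wDD p 0 d), sub_sub_cancel, hwK]
        rw [e1]
        exact klBer_mono hw0 hw1 hwα hzα hz1
      have hE : 0 ≤ E := by
        rw [hE_def]
        split_ifs with hif
        · apply mul_nonneg hz0.le
          apply klBer_nonneg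
          · exact div_nonneg hβ0.le hz0.le
          · rw [div_le_one hz0]; linarith
          · exact div_pos (mul_pos (Real.exp_pos _) hp0) hw0
          · rw [div_lt_one hw0]
            have : wDD p 0 d = Real.exp (-d) * p + (1 - Real.exp (-d)) := by
              unfold wDD; ring
            nlinarith
        · exact le_rfl
      rw [hb2]
      apply mul_le_mul_of_nonneg_left _ (div_nonneg zero_le_one hθ'.le)
      apply one_div_le_one_div_of_le (mul_pos hd hK)
      apply mul_le_mul_of_nonneg_left _ hd.le
      linarith
  -- conclude
  intro n
  unfold mDD mCOMP
  apply mul_le_mul_of_nonneg_right key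
  rcases Nat.eq_zero_or_pos n with hn | hn
  · subst hn
    simp [Real.zero_rpow hθ0.ne']
  · have hn1 : (1:ℝ) ≤ (n:ℝ) := by exact_mod_cast hn
    have hk1 : 0 < ⌈(n:ℝ) ^ θ⌉₊ :=
      Nat.ceil_pos.mpr (Real.rpow_pos_of_pos (by linarith) θ)
    have hkn : (⌈(n:ℝ) ^ θ⌉₊ : ℝ) ≤ (n : ℝ) := by
      have h1 : (n:ℝ) ^ θ ≤ (n:ℝ) ^ (1:ℝ) :=
        Real.rpow_le_rpow_of_exponent_le hn1 hθ1.le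
      rw [Real.rpow_one] at h1
      exact_mod_cast Nat.ceil_le.mpr (by exact_mod_cast h1)
    have hkpos : (0:ℝ) < (⌈(n:ℝ) ^ θ⌉₊ : ℝ) := by exact_mod_cast hk1
    apply mul_nonneg hkpos.le
    apply Real.log_nonneg
    rw [le_div_iff₀ hkpos]
    linarith

end
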